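/- Let n be an even positive integer and let k be an integer with 1 ≤ k ≤ n−1. Then the number of parity-alternate permutations A = a_1 a_2 ⋯ a_n of [n] with exactly k ascents satisfying a_1 < a_n equals (n−k)·S_{n−1,k−1}. -/

import Mathlib

open Finset

/-- Number of ascents of a permutation of `[n]` (positions `i` with `a_i < a_{i+1}`). -/
def ascents {n : ℕ} (A : Equiv.Perm (Fin n)) : ℕ :=
  (univ.filter fun i : Fin n => ∃ h : i.val + 1 < n, A i < A ⟨i.val + 1, h⟩).card

/-- Number of inversions of a permutation. -/
def invNum {n : ℕ} (A : Equiv.Perm (Fin n)) : ℕ :=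
  (univ.filter fun p : Fin n × Fin n => p.1 < p.2 ∧ A p.2 < A p.1).card

/-- A permutation is parity-alternate if consecutive entries have different parity. -/
def IsPAP {n : ℕ} (A : Equiv.Perm (Fin n)) : Prop :=
  ∀ i : Fin n, ∀ h : i.val + 1 < n, (A i).val % 2 ≠ (A ⟨i.val + 1, h⟩).val % 2

instance {n : ℕ} (A : Equiv.Perm (Fin n)) : Decidable (IsPAP A) := by
  unfold IsPAP; infer_instance

/-- `P_{n,k}`: number of even parity-alternate permutations of `[n]` with `k` ascents. -/
def papEven (n k : ℕ) : ℕ :=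
  (univ.filter fun A : Equiv.Perm (Fin n) => IsPAP A ∧ ascents A = k ∧ Even (invNum A)).card

/-- `Q_{n,k}`: number of odd parity-alternate permutations of `[n]` with `k` ascents. -/
def papOdd (n k : ℕ) : ℕ :=
  (univ.filter fun A : Equiv.Perm (Fin n) => IsPAP A ∧ ascents A = k ∧ Odd (invNum A)).card

/-- `S_{n,k}`: number of parity-alternate permutations of `[n]` with `k` ascents. -/
def papTotal (n k : ℕ) : ℕ :=
  (univ.filter fun A : Equiv.Perm (Fin n) => IsPAP A ∧ ascents A = k).card

/-- `R_{n,k} = P_{n,k} - Q_{n,k}`. -/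
def papSigned (n k : ℕ) : ℤ := (papEven n k : ℤ) - papOdd n k

/-- `B_{n,k}`: number of even permutations of `[n]` with `k` ascents. -/
def eulerEven (n k : ℕ) : ℕ :=
  (univ.filter fun A : Equiv.Perm (Fin n) => ascents A = k ∧ Even (invNum A)).card

/-- `C_{n,k}`: number of odd permutations of `[n]` with `k` ascents. -/
def eulerOdd (n k : ℕ) : ℕ :=
  (univ.filter fun A : Equiv.Perm (Fin n) => ascents A = k ∧ Odd (invNum A)).card

/-- `D_{n,k} = B_{n,k} - C_{n,k}`: the signed Eulerian number. -/
def eulerSigned (n k : ℕ) : ℤ := (eulerEven n k : ℤ) - eulerOdd n k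

open Fin.CommRing

section Aux

open Equiv

variable {M : ℕ}

/-- cyclic ascent number -/
private def cycAsc (A : Perm (Fin (M+1))) : ℕ :=
  (univ.filter fun j : Fin (M+1) => A j < A (j + 1)).card

private lemma succ_eq_add_one {j : Fin (M+1)} (h : j.val + 1 < M + 1) :
    j + 1 = ⟨j.val + 1, h⟩ := by
  have hlt : j < Fin.last M := by
    rw [Fin.lt_iff_val_lt_val]; simpa using Nat.lt_of_succ_lt_succ h
  ext
  exact Fin.val_add_one_of_lt hlt

private lemma cycAsc_eq (A : Perm (Fin (M+1))) :
    cycAsc A = ascents A + if A (Fin.last M) < A 0 then 1 else 0 := by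
  classical
  unfold cycAsc ascents
  have hset : (univ.filter fun j : Fin (M+1) => A j < A (j + 1)) =
      (univ.filter fun i : Fin (M+1) => ∃ h : i.val + 1 < M + 1, A i < A ⟨i.val + 1, h⟩) ∪
      (univ.filter fun j : Fin (M+1) => j = Fin.last M ∧ A (Fin.last M) < A 0) := by
    ext j
    simp only [mem_filter, mem_union, mem_univ, true_and]
    by_cases hj : j = Fin.last M
    · subst hj
      rw [Fin.last_add_one]
      constructor
      · intro hlt; exact Or.inr ⟨rfl, hlt⟩
      · rintro (⟨h, _⟩ | ⟨_, hlt⟩)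
        · simp at h
        · exact hlt
    · have hlt : j.val + 1 < M + 1 := by
        have := Fin.val_lt_last hj; omega
      rw [succ_eq_add_one hlt]
      constructor
      · intro h; exact Or.inl ⟨hlt, h⟩
      · rintro (⟨h', hh⟩ | ⟨heq, _⟩)
        · exact hh
        · exact absurd heq hj
  rw [hset, Finset.card_union_of_disjoint]
  · congr 1
    split_ifs with h
    · rw [show (univ.filter fun j : Fin (M+1) => j = Fin.last M ∧ A (Fin.last M) < A 0)
          = {Fin.last M} from by ext x; simp [h]]
      simp
    · rw [show (univ.filter fun j : Fin (M+1) => j = Fin.last M ∧ A (Fin.last M) < A 0)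
          = ∅ from by ext x; simp [h]]
      simp
  · rw [Finset.disjoint_left]
    rintro a ha hb
    simp only [mem_filter, mem_univ, true_and] at ha hb
    obtain ⟨h', _⟩ := ha
    rw [hb.1] at h'
    simp at h'

private lemma cycAsc_rot (A : Perm (Fin (M+1))) (r : Fin (M+1)) :
    cycAsc (A * Equiv.addRight r) = cycAsc A := by
  unfold cycAsc
  apply Finset.card_bij' (i := fun j _ => j + r) (j := fun j _ => j - r)
  · intro a ha
    simp only [mem_filter, mem_univ, true_and] at ha ⊢
    have h1 : (A * Equiv.addRight r) a = A (a + r) := rfl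
    have h2 : (A * Equiv.addRight r) (a + 1) = A (a + 1 + r) := rfl
    rw [h1, h2] at ha
    rwa [show a + 1 + r = a + r + 1 from by ring] at ha
  · intro a ha
    simp only [mem_filter, mem_univ, true_and] at ha ⊢
    have h1 : (A * Equiv.addRight r) (a - r) = A (a - r + r) := rfl
    have h2 : (A * Equiv.addRight r) (a - r + 1) = A (a - r + 1 + r) := rfl
    rw [h1, h2, show a - r + r = a from by ring, show a - r + 1 + r = a + 1 from by ring]
    exact ha
  · intro a _; ring
  · intro a _; ring

private lemma pap_parity {A : Perm (Fin (M+1))} (hA : IsPAP A) :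
    ∀ (i : ℕ) (h : i < M + 1), (A ⟨i, h⟩).val % 2 = ((A 0).val + i) % 2 := by
  intro i
  induction i with
  | zero =>
    intro h
    have : (⟨0, h⟩ : Fin (M+1)) = 0 := rfl
    rw [this]
    omega
  | succ t ih =>
    intro h
    have h1 : t < M + 1 := by omega
    have h2 : (A ⟨t, h1⟩).val % 2 ≠ (A ⟨t + 1, h⟩).val % 2 := hA ⟨t, h1⟩ h
    have h3 := ih h1
    omega

private lemma pap_cyclic {A : Perm (Fin (M+1))} (hA : IsPAP A) (hn : (M + 1) % 2 = 0) :
    ∀ j : Fin (M+1), (A j).val % 2 ≠ (A (j + 1)).val % 2 := by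
  intro j
  by_cases hj : j = Fin.last M
  · subst hj
    rw [Fin.last_add_one]
    have h0 : (A (Fin.last M)).val % 2 = ((A 0).val + M) % 2 := pap_parity hA M (by omega)
    omega
  · have hlt : j.val + 1 < M + 1 := by
      have := Fin.val_lt_last hj; omega
    rw [succ_eq_add_one hlt]
    exact hA j hlt

private lemma pap_rot {A : Perm (Fin (M+1))} (hA : IsPAP A) (hn : (M + 1) % 2 = 0)
    (r : Fin (M+1)) : IsPAP (A * Equiv.addRight r) := by
  intro i h
  have hadd : (⟨i.val + 1, h⟩ : Fin (M+1)) = i + 1 := (succ_eq_add_one h).symm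
  show (A (i + r)).val % 2 ≠ (A ((⟨i.val + 1, h⟩ : Fin (M+1)) + r)).val % 2
  rw [hadd, show i + 1 + r = i + r + 1 from by ring]
  exact pap_cyclic hA hn (i + r)

private lemma pap_zero_even {A : Perm (Fin (M+1))} (hA : IsPAP A) (hm : M % 2 = 0) :
    (A 0).val % 2 = 0 := by
  have hsum : ∑ i : Fin (M+1), ((A i).val : ZMod 2) = ∑ i : Fin (M+1), ((i.val : ZMod 2)) :=
    Equiv.sum_comp A (fun x => ((x.val : ZMod 2)))
  have hterm : ∀ i : Fin (M+1), ((A i).val : ZMod 2) = ((A 0).val : ZMod 2) + (i.val : ZMod 2) := by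
    intro i
    have h2 : (A i).val % 2 = ((A 0).val + i.val) % 2 := pap_parity hA i.val i.isLt
    have h3 := congrArg (fun t : ℕ => ((t : ZMod 2))) h2
    simp only [ZMod.natCast_mod, Nat.cast_add] at h3
    exact h3
  rw [Finset.sum_congr rfl (fun i _ => hterm i)] at hsum
  rw [Finset.sum_add_distrib, Finset.sum_const, Finset.card_univ, Fintype.card_fin] at hsum
  have hc : (M + 1) • ((A 0).val : ZMod 2) = 0 := by
    nth_rewrite 2 [← zero_add (∑ i : Fin (M+1), ((i.val : ZMod 2)))] at hsum
    exact add_right_cancel hsum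
  have hmul : ((M + 1 : ℕ) : ZMod 2) * ((A 0).val : ZMod 2) = 0 := by
    rw [← nsmul_eq_mul]; exact hc
  have hodd : ((M + 1 : ℕ) : ZMod 2) = 1 := by
    have h1 : (M + 1) % 2 = 1 := by omega
    rw [← ZMod.natCast_mod (M+1) 2, h1, Nat.cast_one]
  rw [hodd, one_mul] at hmul
  have := (ZMod.natCast_eq_zero_iff _ 2).mp hmul
  omega

/-- extend a permutation of `Fin M` to `Fin (M+1)` fixing the last element -/
private def iota (B : Perm (Fin M)) : Perm (Fin (M+1)) where
  toFun := Fin.lastCases (Fin.last M) (fun j => (B j).castSucc)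
  invFun := Fin.lastCases (Fin.last M) (fun j => (B.symm j).castSucc)
  left_inv := by
    intro i
    induction i using Fin.lastCases with
    | last => simp
    | cast j => simp
  right_inv := by
    intro i
    induction i using Fin.lastCases with
    | last => simp
    | cast j => simp

private lemma iota_castSucc (B : Perm (Fin M)) (j : Fin M) :
    iota B j.castSucc = (B j).castSucc :=
  Fin.lastCases_castSucc (motive := fun _ => Fin (M+1)) ..

private lemma iota_last (B : Perm (Fin M)) : iota B (Fin.last M) = Fin.last M :=
  Fin.lastCases_last (motive := fun _ => Fin (M+1)) ..

private lemma iota_mk (B : Perm (Fin M)) (v : ℕ) (hv : v < M) (hv2 : v < M + 1) :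
    iota B ⟨v, hv2⟩ = (B ⟨v, hv⟩).castSucc := by
  have h : (⟨v, hv2⟩ : Fin (M+1)) = Fin.castSucc ⟨v, hv⟩ := rfl
  rw [h, iota_castSucc]

private lemma iota_mk_last (B : Perm (Fin M)) (hv2 : M < M + 1) :
    iota B ⟨M, hv2⟩ = Fin.last M := by
  have h : (⟨M, hv2⟩ : Fin (M+1)) = Fin.last M := rfl
  rw [h, iota_last]

private lemma ascents_iota (B : Perm (Fin (M+1))) :
    ascents (iota B) = ascents B + 1 := by
  classical
  unfold ascents
  have hset : (univ.filter fun i : Fin (M+2) =>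
      ∃ h : i.val + 1 < M + 2, iota B i < iota B ⟨i.val + 1, h⟩) =
      insert (Fin.castSucc (Fin.last M))
        ((univ.filter fun i : Fin (M+1) =>
          ∃ h : i.val + 1 < M + 1, B i < B ⟨i.val + 1, h⟩).map
            ⟨Fin.castSucc, Fin.castSucc_injective _⟩) := by
    ext i
    simp only [mem_filter, mem_univ, true_and, mem_insert, mem_map,
      Function.Embedding.coeFn_mk]
    constructor
    · rintro ⟨h, hlt⟩
      by_cases hiM : i.val = M
      · left
        apply Fin.ext
        simpa using hiM
      · right
        have hi1 : i.val < M := by omega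
        have hlt1 : i.val + 1 < M + 1 := by omega
        have r1 : iota B i = (B ⟨i.val, by omega⟩).castSucc := iota_mk B i.val (by omega) i.isLt
        have r2 : iota B ⟨i.val + 1, h⟩ = (B ⟨i.val + 1, hlt1⟩).castSucc :=
          iota_mk B (i.val + 1) hlt1 h
        rw [r1, r2] at hlt
        exact ⟨⟨i.val, by omega⟩, ⟨hlt1, Fin.castSucc_lt_castSucc_iff.mp hlt⟩, Fin.ext rfl⟩
    · rintro (rfl | ⟨j, hj, rfl⟩)
      · have hX : (Fin.castSucc (Fin.last M)).val + 1 < M + 2 := by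
          simp only [Fin.coe_castSucc, Fin.val_last]; omega
        refine ⟨hX, ?_⟩
        have r1 : iota B (Fin.castSucc (Fin.last M)) = (B (Fin.last M)).castSucc :=
          iota_castSucc B (Fin.last M)
        have r2 : iota B ⟨(Fin.castSucc (Fin.last M)).val + 1, hX⟩ = Fin.last (M+1) :=
          iota_mk_last B (by simpa using hX)
        rw [r1, r2]
        exact Fin.castSucc_lt_last _
      · obtain ⟨hjb, hjlt⟩ := hj
        have hX : (Fin.castSucc j).val + 1 < M + 2 := by
          simp only [Fin.coe_castSucc]; omega
        refine ⟨hX, ?_⟩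
        have r1 : iota B (Fin.castSucc j) = (B j).castSucc := iota_castSucc B j
        have r2 : iota B ⟨(Fin.castSucc j).val + 1, hX⟩
            = (B ⟨j.val + 1, hjb⟩).castSucc := iota_mk B (j.val + 1) hjb (by simpa using hX)
        rw [r1, r2]
        exact Fin.castSucc_lt_castSucc_iff.mpr hjlt
  rw [hset, Finset.card_insert_of_notMem, Finset.card_map]
  simp only [mem_map, Function.Embedding.coeFn_mk, not_exists]
  rintro j ⟨hj, heq⟩
  simp only [mem_filter, mem_univ, true_and] at hj
  obtain ⟨hj1, -⟩ := hj
  have hje : j = Fin.last M := Fin.castSucc_injective _ heq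
  subst hje
  simp at hj1

private lemma isPAP_iota {B : Perm (Fin (M+1))} (hm : (M + 1) % 2 = 1) (hB : IsPAP B) :
    IsPAP (iota B) := by
  intro i h
  by_cases hc : i.val + 1 < M + 1
  · have r1 : iota B i = (B ⟨i.val, by omega⟩).castSucc := iota_mk B i.val (by omega) i.isLt
    have r2 : iota B ⟨i.val + 1, h⟩ = (B ⟨i.val + 1, hc⟩).castSucc :=
      iota_mk B (i.val + 1) hc h
    rw [r1, r2]
    simpa using hB ⟨i.val, by omega⟩ hc
  · have hiM : i.val = M := by omega
    have r1 : iota B i = (B (Fin.last M)).castSucc := by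
      have e : i = Fin.castSucc (Fin.last M) := Fin.ext (by simpa using hiM)
      rw [e, iota_castSucc]
    have r2 : iota B ⟨i.val + 1, h⟩ = Fin.last (M+1) := by
      have e : (⟨i.val + 1, h⟩ : Fin (M+2)) = Fin.last (M+1) := Fin.ext (by simpa using hiM)
      rw [e, iota_last]
    rw [r1, r2]
    have hz : (B 0).val % 2 = 0 := pap_zero_even hB (by omega)
    have hp : (B (Fin.last M)).val % 2 = ((B 0).val + M) % 2 := pap_parity hB M (by omega)
    simp only [Fin.coe_castSucc, Fin.val_last]
    omega

private lemma isPAP_of_iota {B : Perm (Fin (M+1))} (hP : IsPAP (iota B)) : IsPAP B := by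
  intro j h
  have h' : (Fin.castSucc j).val + 1 < M + 2 := by have := j.isLt; simp only [Fin.coe_castSucc]; omega
  have key := hP (Fin.castSucc j) h'
  have r1 : iota B (Fin.castSucc j) = (B j).castSucc := iota_castSucc B j
  have r2 : iota B ⟨(Fin.castSucc j).val + 1, h'⟩ = (B ⟨j.val + 1, h⟩).castSucc :=
    iota_mk B (j.val + 1) h (by simpa using h')
  rw [r1, r2] at key
  simpa using key

private noncomputable def trunc (R : Perm (Fin (M+1))) (hR : R (Fin.last M) = Fin.last M) : Perm (Fin M) :=
  Equiv.ofBijective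
    (fun j => (R j.castSucc).castPred (fun hc => (Fin.castSucc_lt_last j).ne
      (R.injective (hc.trans hR.symm))))
    (Finite.injective_iff_bijective.mp (by
      intro a b hab
      apply Fin.castSucc_injective
      apply R.injective
      have h2 := congrArg Fin.castSucc hab
      rwa [Fin.castSucc_castPred, Fin.castSucc_castPred] at h2))

private lemma iota_trunc (R : Perm (Fin (M+1))) (hR : R (Fin.last M) = Fin.last M) :
    iota (trunc R hR) = R := by
  apply Equiv.ext
  intro i
  induction i using Fin.lastCases with
  | last => rw [iota_last, hR]
  | cast j =>
    rw [iota_castSucc]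
    show ((trunc R hR) j).castSucc = R j.castSucc
    unfold trunc
    simp only [Equiv.ofBijective_apply]
    rw [Fin.castSucc_castPred]

private lemma card_anchored {m : ℕ} (hm : m % 2 = 1) (k : ℕ) :
    ((univ : Finset (Perm (Fin (m+1)))).filter fun R =>
        IsPAP R ∧ ascents R = k + 1 ∧ R (Fin.last m) = Fin.last m).card
      = papTotal m k := by
  classical
  obtain ⟨M, rfl⟩ : ∃ M, m = M + 1 := ⟨m - 1, by omega⟩
  unfold papTotal
  symm
  apply Finset.card_bij (i := fun B _ => iota B)
  · intro B hB
    simp only [mem_filter, mem_univ, true_and] at hB ⊢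
    exact ⟨isPAP_iota hm hB.1, by rw [ascents_iota, hB.2], iota_last B⟩
  · intro B₁ h₁ B₂ h₂ heq
    apply Equiv.ext
    intro j
    have h3 := DFunLike.congr_fun heq (Fin.castSucc j)
    rw [iota_castSucc, iota_castSucc] at h3
    exact Fin.castSucc_injective _ h3
  · intro R hR
    simp only [mem_filter, mem_univ, true_and] at hR
    obtain ⟨h1, h2, h3⟩ := hR
    refine ⟨trunc R h3, ?_, iota_trunc R h3⟩
    simp only [mem_filter, mem_univ, true_and]
    constructor
    · apply isPAP_of_iota (B := trunc R h3)
      rwa [iota_trunc]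
    · have h4 := ascents_iota (trunc R h3)
      rw [iota_trunc] at h4
      omega

end Aux

theorem card_pap_first_lt_last (n k : ℕ) (hn : Even n) (hn0 : 0 < n)
    (hk1 : 1 ≤ k) (hk2 : k ≤ n - 1) :
    (univ.filter fun A : Equiv.Perm (Fin n) =>
        IsPAP A ∧ ascents A = k ∧ A ⟨0, hn0⟩ < A ⟨n - 1, by omega⟩).card
      = (n - k) * papTotal (n - 1) (k - 1) := by
  classical
  obtain ⟨m, rfl⟩ : ∃ m, n = m + 1 := ⟨n - 1, by omega⟩
  have hm : m % 2 = 1 := by obtain ⟨t, ht⟩ := hn; omega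
  have hn2 : (m + 1) % 2 = 0 := by omega
  have hm1 : 1 ≤ m := by omega
  obtain ⟨k', rfl⟩ : ∃ k', k = k' + 1 := ⟨k - 1, by omega⟩
  have hk2' : k' + 1 ≤ m := by omega
  suffices h : (univ.filter fun A : Equiv.Perm (Fin (m+1)) =>
      IsPAP A ∧ ascents A = k' + 1 ∧ A 0 < A (Fin.last m)).card
      = (m + 1 - (k' + 1)) * papTotal m k' by
    exact h
  have hlastneg : (Fin.last m : Fin (m+1)) = -1 :=
    eq_neg_of_add_eq_zero_left (Fin.last_add_one m)
  have hone : (1 : Fin (m+1)) ≠ 0 := by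
    intro hcon
    have := congrArg Fin.val hcon
    rw [Fin.val_one', Nat.mod_eq_of_lt (by omega), Fin.val_zero] at this
    omega
  set f : Equiv.Perm (Fin (m+1)) → Equiv.Perm (Fin (m+1)) :=
    fun A => A * Equiv.addRight (A⁻¹ (Fin.last m) + 1) with hfdef
  have hf_last : ∀ A : Equiv.Perm (Fin (m+1)), f A (Fin.last m) = Fin.last m := by
    intro A
    have h1 : Fin.last m + (A⁻¹ (Fin.last m) + 1) = A⁻¹ (Fin.last m) := by
      rw [hlastneg]; ring
    show A (Fin.last m + (A⁻¹ (Fin.last m) + 1)) = Fin.last m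
    rw [h1]; exact A.apply_symm_apply _
  have hmem : ∀ A ∈ (univ.filter fun A : Equiv.Perm (Fin (m+1)) =>
      IsPAP A ∧ ascents A = k' + 1 ∧ A 0 < A (Fin.last m)),
      f A ∈ (univ.filter fun R : Equiv.Perm (Fin (m+1)) =>
        IsPAP R ∧ ascents R = k' + 1 ∧ R (Fin.last m) = Fin.last m) := by
    intro A hA
    simp only [mem_filter, mem_univ, true_and] at hA ⊢
    obtain ⟨hP, hasc, hlt⟩ := hA
    refine ⟨pap_rot hP hn2 _, ?_, hf_last A⟩
    have c1 : cycAsc (f A) = cycAsc A := cycAsc_rot A _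
    have c2 := cycAsc_eq A
    have c3 := cycAsc_eq (f A)
    rw [if_neg (lt_asymm hlt)] at c2
    rw [hf_last A, if_neg (not_lt.mpr (Fin.le_last _))] at c3
    omega
  rw [Finset.card_eq_sum_card_fiberwise hmem]
  have hfib : ∀ R ∈ (univ.filter fun R : Equiv.Perm (Fin (m+1)) =>
      IsPAP R ∧ ascents R = k' + 1 ∧ R (Fin.last m) = Fin.last m),
      ((univ.filter fun A : Equiv.Perm (Fin (m+1)) =>
        IsPAP A ∧ ascents A = k' + 1 ∧ A 0 < A (Fin.last m)).filter
          fun A => f A = R).card = m + 1 - (k' + 1) := by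
    intro R hR
    simp only [mem_filter, mem_univ, true_and] at hR
    obtain ⟨hPR, hascR, hanch⟩ := hR
    have hRinv : R⁻¹ (Fin.last m) = Fin.last m := by
      have h5 := congrArg (fun x => R⁻¹ x) hanch
      simp only [show R⁻¹ (R (Fin.last m)) = Fin.last m from R.symm_apply_apply _] at h5
      exact h5.symm
    have hcycR : cycAsc R = k' + 1 := by
      have h6 := cycAsc_eq R
      rw [hanch, if_neg (not_lt.mpr (Fin.le_last _))] at h6
      omega
    have hcard : (univ.filter fun r : Fin (m+1) => ¬ R r < R (r + 1)).card
        = m + 1 - (k' + 1) := by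
      have h1 : (univ.filter fun r : Fin (m+1) => R r < R (r + 1)).card = k' + 1 := hcycR
      rw [Finset.filter_not, Finset.card_sdiff_of_subset (Finset.filter_subset _ _), h1,
        Finset.card_univ, Fintype.card_fin]
    rw [← hcard]
    have key : ∀ A : Equiv.Perm (Fin (m+1)), f A = R →
        A = R * Equiv.addRight (-(A⁻¹ (Fin.last m) + 1)) := by
      intro A hfA
      have h1 : A * Equiv.addRight (A⁻¹ (Fin.last m) + 1) = R := hfA
      have h2 := congrArg (fun X => X * (Equiv.addRight (A⁻¹ (Fin.last m) + 1))⁻¹) h1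
      simp only [mul_inv_cancel_right] at h2
      have h3 : R * (Equiv.addRight (A⁻¹ (Fin.last m) + 1))⁻¹
          = R * Equiv.addRight (-(A⁻¹ (Fin.last m) + 1)) := by
        congr 1
        rw [show (Equiv.addRight (A⁻¹ (Fin.last m) + 1))⁻¹
          = (Equiv.addRight (A⁻¹ (Fin.last m) + 1)).symm from rfl, Equiv.addRight_symm]
      exact h2.trans h3
    apply Finset.card_bij (i := fun A _ => -(A⁻¹ (Fin.last m) + 1) - 1)
    · intro A hA
      simp only [mem_filter, mem_univ, true_and] at hA ⊢
      obtain ⟨⟨hP, hasc, hlt⟩, hfA⟩ := hA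
      set s : Fin (m+1) := A⁻¹ (Fin.last m) + 1 with hs
      have hAR : A = R * Equiv.addRight (-s) := by rw [hs]; exact key A hfA
      have e0 : A 0 = R (-s - 1 + 1) := by
        rw [hAR]
        show R (0 + -s) = R (-s - 1 + 1)
        congr 1
        ring
      have e1 : A (Fin.last m) = R (-s - 1) := by
        rw [hAR]
        show R (Fin.last m + -s) = R (-s - 1)
        congr 1
        rw [hlastneg]; ring
      rw [e0, e1] at hlt
      exact lt_asymm hlt
    · intro A1 h1 A2 h2 heq
      simp only [mem_filter, mem_univ, true_and] at h1 h2
      have hA1 := key A1 h1.2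
      have hA2 := key A2 h2.2
      have heq2 : -(A1⁻¹ (Fin.last m) + 1) = -(A2⁻¹ (Fin.last m) + 1) := by
        have := congrArg (fun x => x + 1) heq
        simpa using this
      rw [hA1, hA2, heq2]
    · intro r hr
      simp only [mem_filter, mem_univ, true_and] at hr
      set A := R * Equiv.addRight (r + 1) with hAdef
      have happ : ∀ x : Fin (m+1), A x = R (x + (r + 1)) := fun x => rfl
      have hA0 : A 0 = R (r + 1) := by rw [happ, zero_add]
      have hAlast : A (Fin.last m) = R r := by
        rw [happ]
        congr 1
        rw [hlastneg]; ring
      have hRlt : R (r + 1) < R r := by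
        rcases lt_or_eq_of_le (not_lt.mp hr) with h | h
        · exact h
        · exfalso
          have := R.injective h
          have h7 : (1 : Fin (m+1)) = 0 := by
            have := congrArg (fun x => x - r) this
            simpa using this
          exact hone h7
      have hAinv : A⁻¹ (Fin.last m) = Fin.last m + (-(r + 1)) := by
        show ((R * Equiv.addRight (r + 1))⁻¹) (Fin.last m) = _
        rw [mul_inv_rev]
        show (Equiv.addRight (r + 1))⁻¹ (R⁻¹ (Fin.last m)) = _
        rw [hRinv, show (Equiv.addRight (r + 1))⁻¹
          = (Equiv.addRight (r + 1)).symm from rfl, Equiv.addRight_symm]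
        rfl
      have hfA : f A = R := by
        apply Equiv.ext
        intro x
        show A (x + (A⁻¹ (Fin.last m) + 1)) = R x
        rw [happ]
        congr 1
        rw [hAinv, hlastneg]; ring
      refine ⟨A, ?_, ?_⟩
      · simp only [mem_filter, mem_univ, true_and]
        refine ⟨⟨pap_rot hPR hn2 _, ?_, ?_⟩, hfA⟩
        · have c1 : cycAsc A = cycAsc R := cycAsc_rot R _
          have c3 := cycAsc_eq A
          rw [hAlast, hA0, if_neg hr] at c3
          omega
        · rw [hA0, hAlast]; exact hRlt
      · rw [hAinv, hlastneg]; ring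
  rw [Finset.sum_congr rfl hfib, Finset.sum_const, smul_eq_mul, card_anchored hm k']
  exact Nat.mul_comm _ _
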